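/- For every integer k ≥ 0, the group G = D₈ × C₂ᵏ (the direct product of the dihedral group of order 8 with k copies of the cyclic group of order 2) satisfies Δ(G) = 2ᵏ, where Δ(G) = |G| − c(G) and c(G) is the number of cyclic subgroups of G. In particular |G| = 8·Δ(G). -/

import Mathlib

section Aux

lemma isCyclic_subgroup_iff' {G : Type*} [Group G] (H : Subgroup G) :
    IsCyclic H ↔ ∃ g : G, Subgroup.zpowers g = H := by
  constructor
  · rintro ⟨⟨g, hgH⟩, hgen⟩
    refine ⟨g, le_antisymm ((Subgroup.zpowers_le).2 hgH) ?_⟩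
    intro x hx
    obtain ⟨m, hm⟩ := hgen ⟨x, hx⟩
    refine ⟨m, ?_⟩
    have := congrArg (Subtype.val) hm
    simpa using this
  · rintro ⟨g, rfl⟩
    exact ⟨⟨g, Subgroup.mem_zpowers g⟩, fun x => by
      obtain ⟨m, hm⟩ := x.2
      exact ⟨m, Subtype.ext (by simpa using hm)⟩⟩

lemma fiber_eq' {G : Type*} [Group G] (h4 : ∀ g : G, g ^ 4 = 1) (g h : G) :
    Subgroup.zpowers h = Subgroup.zpowers g ↔ h = g ∨ h = g⁻¹ := by
  have red : ∀ a : G, ∀ m : ℤ, a ^ m = a ^ (m % 4) := by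
    intro a m
    conv_lhs => rw [← Int.emod_add_mul_ediv m 4, zpow_add, zpow_mul]
    simp [show (a : G) ^ (4:ℤ) = 1 by exact_mod_cast h4 a]
  constructor
  · intro hz
    have hh : h ∈ Subgroup.zpowers g := hz ▸ Subgroup.mem_zpowers h
    obtain ⟨m, hm⟩ := hh
    have hr : h = g ^ (m % 4) := by rw [← hm, ← red]
    have hrange : m % 4 = 0 ∨ m % 4 = 1 ∨ m % 4 = 2 ∨ m % 4 = 3 := by omega
    rcases hrange with h0 | h1 | h2 | h3
    · rw [h0] at hr; simp only [zpow_zero] at hr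
      subst hr
      have : Subgroup.zpowers g = ⊥ := by rw [← hz]; simp [Subgroup.zpowers_eq_bot]
      left
      rw [Subgroup.zpowers_eq_bot] at this
      simp [this]
    · left; rw [h1] at hr; simpa using hr
    · rw [h2] at hr
      have hg : g ∈ Subgroup.zpowers h := hz.symm ▸ Subgroup.mem_zpowers g
      obtain ⟨j, hj⟩ := hg
      rw [hr] at hj
      have : g ^ (2 * j) = g := by rw [zpow_mul]; exact hj
      have h2j : g ^ ((2*j) % 4) = g := by rw [← red]; exact this
      have : (2*j) % 4 = 0 ∨ (2*j) % 4 = 2 := by omega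
      rcases this with e0 | e2
      · rw [e0] at h2j; simp only [zpow_zero] at h2j
        left; rw [hr, ← h2j]; simp
      · rw [e2] at h2j
        have hg1 : g = 1 := by
          have := h2j
          rw [show ((2:ℤ)) = ((2:ℕ):ℤ) by norm_num, zpow_natCast] at this
          have : g * g = g := by rw [← pow_two]; exact this
          exact mul_eq_left.mp ((mul_left_cancel_iff (a := g)).mpr rfl ▸ this)
        left; rw [hr, hg1]; simp
    · right; rw [h3] at hr
      rw [hr]
      have : g ^ (3:ℤ) * g = 1 := by
        rw [show (3:ℤ) = ((3:ℕ):ℤ) by norm_num, zpow_natCast]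
        rw [← pow_succ]
        exact h4 g
      exact eq_inv_of_mul_eq_one_left this
  · rintro (rfl | rfl)
    · rfl
    · exact Subgroup.zpowers_inv

lemma two_mul_card_image' {G : Type*} [Group G] [Fintype G] [DecidableEq G]
    [DecidableEq (Subgroup G)] (h4 : ∀ g : G, g ^ 4 = 1) :
    2 * (Finset.image (fun g : G => Subgroup.zpowers g) Finset.univ).card
      = Fintype.card G + (Finset.univ.filter (fun g : G => g⁻¹ = g)).card := by
  classical
  set f : G → Subgroup G := fun g => Subgroup.zpowers g with hf
  have h1 : (Finset.univ : Finset G).card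
      = ∑ H ∈ Finset.univ.image f, (Finset.univ.filter fun g => f g = H).card :=
    Finset.card_eq_sum_card_image f Finset.univ
  have h2 : (Finset.univ.filter fun g : G => g⁻¹ = g).card
      = ∑ H ∈ Finset.univ.image f,
          ((Finset.univ.filter fun g : G => g⁻¹ = g).filter (fun g => f g = H)).card :=
    Finset.card_eq_sum_card_fiberwise (fun g _ => Finset.mem_image_of_mem f (Finset.mem_univ g))
  have key : ∀ H ∈ Finset.univ.image f,
      (Finset.univ.filter fun g => f g = H).card
        + ((Finset.univ.filter fun g : G => g⁻¹ = g).filter (fun g => f g = H)).card = 2 := by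
    intro H hH
    obtain ⟨g, -, rfl⟩ := Finset.mem_image.1 hH
    have fib : Finset.univ.filter (fun h => f h = f g) = ({g, g⁻¹} : Finset G) := by
      ext h
      simp [hf, fiber_eq' h4 g h]
    have comm : ((Finset.univ.filter fun g : G => g⁻¹ = g).filter (fun h => f h = f g))
        = ({g, g⁻¹} : Finset G).filter (fun x => x⁻¹ = x) := by
      rw [Finset.filter_filter, ← fib, Finset.filter_filter]
      apply Finset.filter_congr
      intro x _
      exact and_comm
    rw [fib, comm]
    by_cases hg : g⁻¹ = g
    · have hgg : ({g, g⁻¹} : Finset G) = {g} := by rw [hg]; simp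
      rw [hgg]
      rw [Finset.filter_singleton]
      simp [hg]
    · have hg' : ¬ (g = g⁻¹) := fun e => hg e.symm
      have c2 : ({g, g⁻¹} : Finset G).card = 2 := by
        rw [Finset.card_insert_of_notMem (by simpa using hg'), Finset.card_singleton]
      have cf : ({g, g⁻¹} : Finset G).filter (fun x => x⁻¹ = x) = ∅ := by
        rw [Finset.filter_insert, Finset.filter_singleton]
        simp [hg, hg', inv_inv]
      rw [c2, cf]
      simp
  calc 2 * (Finset.univ.image f).card
      = ∑ _H ∈ Finset.univ.image f, 2 := by rw [Finset.sum_const, smul_eq_mul, mul_comm]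
    _ = ∑ H ∈ Finset.univ.image f, ((Finset.univ.filter fun g => f g = H).card
          + ((Finset.univ.filter fun g : G => g⁻¹ = g).filter (fun g => f g = H)).card) :=
        (Finset.sum_congr rfl (fun H hH => (key H hH).symm))
    _ = Fintype.card G + (Finset.univ.filter fun g : G => g⁻¹ = g).card := by
        rw [Finset.sum_add_distrib, ← h1, ← h2, Finset.card_univ]

end Aux

/-- For every `k ≥ 0`, the group `G = D₈ × C₂ᵏ` satisfies `Δ(G) = 2ᵏ`, where
`Δ(G) = |G| − c(G)` and `c(G)` is the number of cyclic subgroups of `G`.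
In particular `|G| = 8·Δ(G)`. -/
theorem delta_dihedral_prod_elemAbelian (k : ℕ) :
    ((Nat.card (DihedralGroup 4 × Multiplicative (Fin k → ZMod 2)) : ℤ)
        - Nat.card {H : Subgroup (DihedralGroup 4 × Multiplicative (Fin k → ZMod 2)) //
            IsCyclic H} = 2 ^ k) ∧
      Nat.card (DihedralGroup 4 × Multiplicative (Fin k → ZMod 2)) = 8 * 2 ^ k := by
  classical
  set A := DihedralGroup 4
  set B := Multiplicative (Fin k → ZMod 2)
  set G := A × B
  -- every element of B is an involution
  have binv : ∀ b : B, b⁻¹ = b := by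
    intro b
    have hbb : b * b = 1 := by
      apply Multiplicative.toAdd.injective
      show Multiplicative.toAdd b + Multiplicative.toAdd b = 0
      funext i
      exact (by decide : ∀ v : ZMod 2, v + v = 0) _
    exact (eq_inv_of_mul_eq_one_left hbb).symm
  -- every element of G satisfies g ^ 4 = 1
  have h4 : ∀ g : G, g ^ 4 = 1 := by
    intro g
    have ha : g.1 ^ 4 = 1 := (by decide : ∀ a : A, a ^ 4 = 1) g.1
    have hb : g.2 ^ 4 = 1 := by
      have : g.2 * g.2 = 1 := by
        have := binv g.2
        calc g.2 * g.2 = g.2⁻¹ * g.2 := by rw [this]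
          _ = 1 := inv_mul_cancel g.2
      calc g.2 ^ 4 = (g.2 * g.2) * (g.2 * g.2) := by rw [pow_succ, pow_succ, pow_succ, pow_one, mul_assoc]
        _ = 1 := by rw [this, one_mul]
    have : g ^ 4 = (g.1 ^ 4, g.2 ^ 4) := rfl
    rw [this, ha, hb]
    rfl
  -- cardinality of G
  have hcardB : Fintype.card B = 2 ^ k := by
    rw [show Fintype.card B = Fintype.card (Fin k → ZMod 2) from Fintype.card_multiplicative _]
    simp [ZMod.card]
  have hcardG : Fintype.card G = 8 * 2 ^ k := by
    rw [Fintype.card_prod, hcardB,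
      show Fintype.card A = 8 by rw [(DihedralGroup.card (n := 4))]]
  -- number of cyclic subgroups equals the card of the image of zpowers
  have hc : Nat.card {H : Subgroup G // IsCyclic H}
      = (Finset.image (fun g : G => Subgroup.zpowers g) Finset.univ).card := by
    have e1 : {H : Subgroup G // IsCyclic H}
        ≃ {H : Subgroup G // H ∈ Finset.image (fun g : G => Subgroup.zpowers g) Finset.univ} :=
      Equiv.subtypeEquivRight (fun H =>
        (isCyclic_subgroup_iff' H).trans (by simp [Finset.mem_image]))
    rw [Nat.card_congr e1, Nat.card_eq_fintype_card, Fintype.card_coe]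
  -- fixed points of inversion
  have hfix : (Finset.univ.filter (fun g : G => g⁻¹ = g)).card = 6 * 2 ^ k := by
    have e2 : {g : G // g⁻¹ = g} ≃ {a : A // a⁻¹ = a} × B :=
      { toFun := fun p => (⟨p.1.1, congrArg Prod.fst p.2⟩, p.1.2)
        invFun := fun x => ⟨(x.1.1, x.2), Prod.ext x.1.2 (binv _)⟩
        left_inv := fun p => rfl
        right_inv := fun x => rfl }
    rw [← Fintype.card_subtype, Fintype.card_congr e2, Fintype.card_prod, hcardB]
    norm_num [(by decide : Fintype.card {a : A // a⁻¹ = a} = 6)]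
    decide
  have hkey := two_mul_card_image' (G := G) h4
  rw [hcardG, hfix] at hkey
  have himg : (Finset.image (fun g : G => Subgroup.zpowers g) Finset.univ).card = 7 * 2 ^ k := by
    omega
  constructor
  · rw [Nat.card_eq_fintype_card (α := G), hcardG, hc, himg]
    push_cast
    ring
  · rw [Nat.card_eq_fintype_card (α := G), hcardG]
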